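/- (Lemma B.2) Let P and P' be two transition functions and π a policy on an episodic loop-free MDP, and for x ∈ X_s (s ≤ L−1) and a ∈ A write ξ(x,a) = Σ_{x'∈X_{s+1}} | P(x'|x,a) − P'(x'|x,a) |. Then for every 1 ≤ k ≤ L−1: Σ_{x∈X_k} Σ_{a∈A} | q^{P,π}(x,a) − q^{P',π}(x,a) | ≤ Σ_{s=0}^{k−1} Σ_{x∈X_s} Σ_{a∈A} q^{P',π}(x,a)·ξ(x,a). -/

import Mathlib

open Finset

/-- An episodic loop-free MDP: layers `X 0, …, X L` (encoded as an `ℕ`-indexed family of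
types, so distinct layers are automatically disjoint), with `X 0` and `X L` singletons,
and a finite nonempty action set `A`. -/
structure LoopFreeMDP where
  L : ℕ
  hL : 1 ≤ L
  X : ℕ → Type
  instFintypeX : ∀ k, Fintype (X k)
  instDecEqX : ∀ k, DecidableEq (X k)
  nonemptyX : ∀ k, k ≤ L → Nonempty (X k)
  x0 : X 0
  hX0 : ∀ y : X 0, y = x0
  xL : X L
  hXL : ∀ y : X L, y = xL
  A : Type
  instFintypeA : Fintype A
  instDecEqA : DecidableEq A
  instNonemptyA : Nonempty A

attribute [instance] LoopFreeMDP.instFintypeX LoopFreeMDP.instDecEqX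
  LoopFreeMDP.instFintypeA LoopFreeMDP.instDecEqA LoopFreeMDP.instNonemptyA

namespace LoopFreeMDP

/-- The type of candidate transition functions. -/
abbrev TransKer (M : LoopFreeMDP) := ∀ k, M.X k → M.A → M.X (k + 1) → ℝ

/-- The type of candidate policies. -/
abbrev PolicyKer (M : LoopFreeMDP) := ∀ k, M.X k → M.A → ℝ

/-- `P` is a transition function: for every layer `k < L`, state and action,
`P (·|x,a)` is a probability vector on `X (k+1)`. -/
def IsTransition (M : LoopFreeMDP) (P : M.TransKer) : Prop :=
  ∀ k, k < M.L → ∀ (x : M.X k) (a : M.A),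
    (∀ x', 0 ≤ P k x a x') ∧ (∑ x', P k x a x' = 1)

/-- `π` is a policy: for every layer `k < L` and state, `π (·|x)` is a probability
vector on `A`. -/
def IsPolicy (M : LoopFreeMDP) (π : M.PolicyKer) : Prop :=
  ∀ k, k < M.L → ∀ x : M.X k,
    (∀ a, 0 ≤ π k x a) ∧ (∑ a, π k x a = 1)

/-- The state-visitation probabilities `μ_k`, defined layer by layer. -/
def mu (M : LoopFreeMDP) (P : M.TransKer) (π : M.PolicyKer) : ∀ k, M.X k → ℝ
  | 0, _ => 1
  | k + 1, x' => ∑ x : M.X k, ∑ a : M.A, M.mu P π k x * π k x a * P k x a x'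

/-- The occupancy measure `q^{P,π}(x,a,x') = μ_k(x)·π(a|x)·P(x'|x,a)`. -/
def occ (M : LoopFreeMDP) (P : M.TransKer) (π : M.PolicyKer)
    (k : ℕ) (x : M.X k) (a : M.A) (x' : M.X (k + 1)) : ℝ :=
  M.mu P π k x * π k x a * P k x a x'

end LoopFreeMDP



private lemma mu_nonneg (M : LoopFreeMDP) (P : M.TransKer) (π : M.PolicyKer)
    (hP : M.IsTransition P) (hπ : M.IsPolicy π) :
    ∀ k, k ≤ M.L → ∀ x : M.X k, 0 ≤ M.mu P π k x := by
  intro k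
  induction k with
  | zero => intro _ x; simp [LoopFreeMDP.mu]
  | succ k ih =>
    intro hk x'
    have hkL : k < M.L := Nat.lt_of_succ_le hk
    rw [LoopFreeMDP.mu]
    apply Finset.sum_nonneg; intro x _
    apply Finset.sum_nonneg; intro a _
    exact mul_nonneg (mul_nonneg (ih hkL.le x) ((hπ k hkL x).1 a)) ((hP k hkL x a).1 x')

private lemma mu_L1_bound (M : LoopFreeMDP) (P P' : M.TransKer) (π : M.PolicyKer)
    (hP : M.IsTransition P) (hP' : M.IsTransition P') (hπ : M.IsPolicy π) :
    ∀ k, k ≤ M.L →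
      ∑ x : M.X k, |M.mu P π k x - M.mu P' π k x| ≤
        ∑ s ∈ Finset.range k, ∑ x : M.X s, ∑ a : M.A,
          (M.mu P' π s x * π s x a) *
            (∑ x' : M.X (s + 1), |P s x a x' - P' s x a x'|) := by
  intro k
  induction k with
  | zero => intro _; simp [LoopFreeMDP.mu]
  | succ k ih =>
    intro hk
    have hkL : k < M.L := Nat.lt_of_succ_le hk
    rw [Finset.sum_range_succ]
    have step : ∑ x' : M.X (k + 1), |M.mu P π (k + 1) x' - M.mu P' π (k + 1) x'| ≤
        (∑ x : M.X k, |M.mu P π k x - M.mu P' π k x|) +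
        ∑ x : M.X k, ∑ a : M.A, (M.mu P' π k x * π k x a) *
            (∑ x' : M.X (k + 1), |P k x a x' - P' k x a x'|) := by
      have h1 : ∀ x' : M.X (k + 1),
          |M.mu P π (k + 1) x' - M.mu P' π (k + 1) x'| ≤
          ∑ x : M.X k, ∑ a : M.A,
            (|M.mu P π k x - M.mu P' π k x| * π k x a * P k x a x'
              + M.mu P' π k x * π k x a * |P k x a x' - P' k x a x'|) := by
        intro x'
        rw [LoopFreeMDP.mu, LoopFreeMDP.mu, ← Finset.sum_sub_distrib]
        refine (Finset.abs_sum_le_sum_abs _ _).trans ?_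
        refine Finset.sum_le_sum fun x _ => ?_
        rw [← Finset.sum_sub_distrib]
        refine (Finset.abs_sum_le_sum_abs _ _).trans ?_
        refine Finset.sum_le_sum fun a _ => ?_
        have hpi := (hπ k hkL x).1 a
        have hPn := (hP k hkL x a).1 x'
        have hmu' := mu_nonneg M P' π hP' hπ k hkL.le x
        have key : M.mu P π k x * π k x a * P k x a x'
            - M.mu P' π k x * π k x a * P' k x a x'
            = (M.mu P π k x - M.mu P' π k x) * π k x a * P k x a x'
              + M.mu P' π k x * π k x a * (P k x a x' - P' k x a x') := by ring
        rw [key]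
        refine (abs_add_le _ _).trans ?_
        rw [abs_mul, abs_mul, abs_mul, abs_mul,
          abs_of_nonneg hpi, abs_of_nonneg hPn, abs_of_nonneg hmu']
      refine (Finset.sum_le_sum fun x' _ => h1 x').trans ?_
      have t1 : ∑ x' : M.X (k + 1), ∑ x : M.X k, ∑ a : M.A,
          |M.mu P π k x - M.mu P' π k x| * π k x a * P k x a x'
          = ∑ x : M.X k, |M.mu P π k x - M.mu P' π k x| := by
        rw [Finset.sum_comm]
        refine Finset.sum_congr rfl fun x _ => ?_
        rw [Finset.sum_comm]
        have e1 : ∀ a : M.A, ∑ x' : M.X (k + 1),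
            |M.mu P π k x - M.mu P' π k x| * π k x a * P k x a x'
            = |M.mu P π k x - M.mu P' π k x| * π k x a := by
          intro a; rw [← Finset.mul_sum, (hP k hkL x a).2, mul_one]
        simp only [e1]
        rw [← Finset.mul_sum, (hπ k hkL x).2, mul_one]
      have t2 : ∑ x' : M.X (k + 1), ∑ x : M.X k, ∑ a : M.A,
          M.mu P' π k x * π k x a * |P k x a x' - P' k x a x'|
          = ∑ x : M.X k, ∑ a : M.A, (M.mu P' π k x * π k x a) *
              (∑ x' : M.X (k + 1), |P k x a x' - P' k x a x'|) := by
        rw [Finset.sum_comm]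
        refine Finset.sum_congr rfl fun x _ => ?_
        rw [Finset.sum_comm]
        refine Finset.sum_congr rfl fun a _ => ?_
        rw [← Finset.mul_sum]
      calc ∑ x' : M.X (k + 1), ∑ x : M.X k, ∑ a : M.A,
            (|M.mu P π k x - M.mu P' π k x| * π k x a * P k x a x'
              + M.mu P' π k x * π k x a * |P k x a x' - P' k x a x'|)
          = (∑ x' : M.X (k + 1), ∑ x : M.X k, ∑ a : M.A,
              |M.mu P π k x - M.mu P' π k x| * π k x a * P k x a x')
            + ∑ x' : M.X (k + 1), ∑ x : M.X k, ∑ a : M.A,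
              M.mu P' π k x * π k x a * |P k x a x' - P' k x a x'| := by
            simp [Finset.sum_add_distrib]
        _ ≤ _ := by rw [t1, t2]
    exact step.trans (add_le_add (ih hkL.le) le_rfl)

/-- **Lemma B.2.** For two transition functions `P, P'` and a policy `π`, with
`ξ(x,a) = ‖P(·|x,a) − P'(·|x,a)‖₁`, the L1 distance between the state-action marginals of the
two occupancy measures at layer `k` (for `1 ≤ k ≤ L−1`) is bounded by the accumulated weighted
transition errors in the previous layers. -/
theorem occupancy_marginal_L1_bound (M : LoopFreeMDP)
    (P P' : M.TransKer) (π : M.PolicyKer)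
    (hP : M.IsTransition P) (hP' : M.IsTransition P') (hπ : M.IsPolicy π) :
    ∀ k, 1 ≤ k → k < M.L →
      ∑ x : M.X k, ∑ a : M.A,
          |(∑ x' : M.X (k + 1), M.occ P π k x a x')
            - (∑ x' : M.X (k + 1), M.occ P' π k x a x')|
        ≤ ∑ s ∈ Finset.range k, ∑ x : M.X s, ∑ a : M.A,
            (∑ x' : M.X (s + 1), M.occ P' π s x a x') *
              (∑ x' : M.X (s + 1), |P s x a x' - P' s x a x'|) := by
  intro k hk1 hkL
  have eq1 : ∀ x : M.X k, ∀ a : M.A,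
      ∑ x' : M.X (k + 1), M.occ P π k x a x' = M.mu P π k x * π k x a := by
    intro x a
    simp only [LoopFreeMDP.occ]
    rw [← Finset.mul_sum, (hP k hkL x a).2, mul_one]
  have eq1' : ∀ x : M.X k, ∀ a : M.A,
      ∑ x' : M.X (k + 1), M.occ P' π k x a x' = M.mu P' π k x * π k x a := by
    intro x a
    simp only [LoopFreeMDP.occ]
    rw [← Finset.mul_sum, (hP' k hkL x a).2, mul_one]
  have lhs_eq : ∑ x : M.X k, ∑ a : M.A,
      |(∑ x' : M.X (k + 1), M.occ P π k x a x')
        - (∑ x' : M.X (k + 1), M.occ P' π k x a x')|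
      = ∑ x : M.X k, |M.mu P π k x - M.mu P' π k x| := by
    refine Finset.sum_congr rfl fun x _ => ?_
    have : ∀ a : M.A,
        |(∑ x' : M.X (k + 1), M.occ P π k x a x')
          - (∑ x' : M.X (k + 1), M.occ P' π k x a x')|
        = |M.mu P π k x - M.mu P' π k x| * π k x a := by
      intro a
      rw [eq1, eq1', ← sub_mul, abs_mul, abs_of_nonneg ((hπ k hkL x).1 a)]
    simp only [this]
    rw [← Finset.mul_sum, (hπ k hkL x).2, mul_one]
  have rhs_eq : ∑ s ∈ Finset.range k, ∑ x : M.X s, ∑ a : M.A,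
      (∑ x' : M.X (s + 1), M.occ P' π s x a x') *
        (∑ x' : M.X (s + 1), |P s x a x' - P' s x a x'|)
      = ∑ s ∈ Finset.range k, ∑ x : M.X s, ∑ a : M.A,
      (M.mu P' π s x * π s x a) *
        (∑ x' : M.X (s + 1), |P s x a x' - P' s x a x'|) := by
    refine Finset.sum_congr rfl fun s hs => ?_
    have hsL : s < M.L := lt_trans (Finset.mem_range.mp hs) hkL
    refine Finset.sum_congr rfl fun x _ => ?_
    refine Finset.sum_congr rfl fun a _ => ?_
    simp only [LoopFreeMDP.occ]
    rw [← Finset.mul_sum, (hP' s hsL x a).2, mul_one]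
  rw [lhs_eq, rhs_eq]
  exact mu_L1_bound M P P' π hP hP' hπ k hkL.le
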